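/- Let L be a finite graded distributive lattice and let K be a full-length sublattice of L. Then for every join-irreducible element x of L, the set {y ∈ K : x ≤ y} has a unique minimal element w_x, and w_x is a join-irreducible element of the lattice K. -/

import Mathlib

/-- `CovByIn K x y`: `y` covers `x` within the subposet `K` (induced order). -/
def CovByIn {L : Type*} [Lattice L] (K : Set L) (x y : L) : Prop :=
  x ∈ K ∧ y ∈ K ∧ x < y ∧ ∀ z ∈ K, x < z → ¬ z < y

/-- Join irreducibility in a lattice with least element `⊥`. -/
def JoinIrred {L : Type*} [Lattice L] [OrderBot L] (x : L) : Prop :=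
  x ≠ ⊥ ∧ ∀ y z : L, x = y ⊔ z → x = y ∨ x = z

/-- Join irreducibility within a sublattice `K` whose minimum element is `mK`. -/
def JoinIrredIn {L : Type*} [Lattice L] (K : Set L) (mK : L) (w : L) : Prop :=
  w ∈ K ∧ w ≠ mK ∧ ∀ y ∈ K, ∀ z ∈ K, w = y ⊔ z → w = y ∨ w = z

theorem stmt_12 {L : Type*} [DistribLattice L] [BoundedOrder L] [Fintype L]
    (ρL : L → ℕ) (hbot : ρL ⊥ = 0) (hcov : ∀ x y : L, x ⋖ y → ρL y = ρL x + 1)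
    (K : Set L) (hK : ∀ x ∈ K, ∀ y ∈ K, x ⊔ y ∈ K ∧ x ⊓ y ∈ K)
    (mK MK : L) (hmK : mK ∈ K) (hMK : MK ∈ K)
    (hmin : ∀ x ∈ K, mK ≤ x) (hmax : ∀ x ∈ K, x ≤ MK)
    (ρK : L → ℕ) (hKbot : ρK mK = 0)
    (hKcov : ∀ x y : L, CovByIn K x y → ρK y = ρK x + 1)
    (hlen : ρK MK = ρL ⊤) :
    ∀ x : L, JoinIrred x →
      (∃! w : L, w ∈ K ∧ x ≤ w ∧ ∀ y ∈ K, x ≤ y → ¬ y < w) ∧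
      (∀ w : L, (w ∈ K ∧ x ≤ w ∧ ∀ y ∈ K, x ≤ y → ¬ y < w) → JoinIrredIn K mK w) := by
  -- ρL is strictly monotone
  have hsm : ∀ a b : L, a < b → ρL a < ρL b := by
    intro a
    induction a using WellFoundedGT.induction with
    | _ a IH =>
      intro b hab
      obtain ⟨c, hc, hcb⟩ := exists_covBy_le_of_lt hab
      rcases eq_or_lt_of_le hcb with rfl | h
      · have := hcov a c hc; omega
      · have h1 := IH c hc.lt b h
        have h2 := hcov a c hc
        omega
  -- every w ∈ K with mK < w covers some element of K
  have hcover : ∀ w ∈ K, mK < w → ∃ u, CovByIn K u w := by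
    intro w hw hmw
    obtain ⟨u, hu, humax⟩ := Set.Finite.exists_maximalFor id {u | u ∈ K ∧ u < w}
      (Set.toFinite _) ⟨mK, hmK, hmw⟩
    refine ⟨u, hu.1, hw, hu.2, fun z hz huz hzw => ?_⟩
    exact absurd (humax ⟨hz, hzw⟩ huz.le) (not_le_of_gt huz)
  -- ρK w + ρL mK ≤ ρL w for w ∈ K
  have key : ∀ w : L, w ∈ K → ρK w + ρL mK ≤ ρL w := by
    intro w
    induction w using WellFoundedLT.induction with
    | _ w IH =>
      intro hw
      rcases eq_or_lt_of_le (hmin w hw) with rfl | hmw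
      · omega
      · obtain ⟨u, hu⟩ := hcover w hw hmw
        have h1 := IH u hu.2.2.1 hu.1
        have h2 := hKcov u w hu
        have h3 := hsm u w hu.2.2.1
        omega
  -- mK = ⊥ and MK = ⊤
  have hMKle : ρL MK ≤ ρL ⊤ := by
    rcases eq_or_lt_of_le (le_top : MK ≤ ⊤) with h | h
    · rw [h]
    · exact (hsm _ _ h).le
  have hkey := key MK hMK
  have hmbot : mK = ⊥ := by
    by_contra h
    have : (⊥ : L) < mK := bot_lt_iff_ne_bot.mpr h
    have := hsm ⊥ mK this
    omega
  have hMtop : MK = ⊤ := by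
    rcases eq_or_lt_of_le (le_top : MK ≤ ⊤) with h | h
    · exact h
    · exact absurd (hsm _ _ h) (by omega)
  intro x hx
  -- existence of a minimal element of {y ∈ K | x ≤ y}
  obtain ⟨w, hw, hwmin⟩ := Set.Finite.exists_minimalFor id {y | y ∈ K ∧ x ≤ y}
    (Set.toFinite _) ⟨MK, hMK, hMtop ▸ le_top⟩
  have hwprop : w ∈ K ∧ x ≤ w ∧ ∀ y ∈ K, x ≤ y → ¬ y < w := by
    refine ⟨hw.1, hw.2, fun y hy hxy hyw => ?_⟩
    exact absurd (hwmin ⟨hy, hxy⟩ hyw.le) (not_le_of_gt hyw)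
  -- uniqueness via meet-closedness
  have huniq : ∀ w₁ w₂ : L, (w₁ ∈ K ∧ x ≤ w₁ ∧ ∀ y ∈ K, x ≤ y → ¬ y < w₁) →
      (w₂ ∈ K ∧ x ≤ w₂ ∧ ∀ y ∈ K, x ≤ y → ¬ y < w₂) → w₁ = w₂ := by
    intro w₁ w₂ h1 h2
    have hm : w₁ ⊓ w₂ ∈ K := (hK w₁ h1.1 w₂ h2.1).2
    have hxm : x ≤ w₁ ⊓ w₂ := le_inf h1.2.1 h2.2.1
    have e1 : w₁ ⊓ w₂ = w₁ := by
      rcases eq_or_lt_of_le (inf_le_left : w₁ ⊓ w₂ ≤ w₁) with h | h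
      · exact h
      · exact absurd h (h1.2.2 _ hm hxm)
    have e2 : w₁ ⊓ w₂ = w₂ := by
      rcases eq_or_lt_of_le (inf_le_right : w₁ ⊓ w₂ ≤ w₂) with h | h
      · exact h
      · exact absurd h (h2.2.2 _ hm hxm)
    rw [← e1, e2]
  refine ⟨⟨w, hwprop, fun w' hw' => huniq w' w hw' hwprop⟩, ?_⟩
  -- join irreducibility of any such minimal element
  intro v hv
  refine ⟨hv.1, ?_, ?_⟩
  · rw [hmbot]
    intro h
    exact hx.1 (le_bot_iff.mp (h ▸ hv.2.1))
  · intro y hy z hz hvyz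
    have hxyz : x ≤ y ⊔ z := hvyz ▸ hv.2.1
    have : x = (x ⊓ y) ⊔ (x ⊓ z) := by
      rw [← inf_sup_left]
      exact (inf_eq_left.mpr hxyz).symm
    have hle : x ≤ y ∨ x ≤ z := by
      rcases hx.2 _ _ this with h | h
      · exact Or.inl (h ▸ inf_le_right)
      · exact Or.inr (h ▸ inf_le_right)
    rcases hle with h | h
    · left
      rcases eq_or_lt_of_le (le_sup_left : y ≤ y ⊔ z) with h' | h'
      · exact hvyz.trans h'.symm
      · exact absurd (hvyz ▸ h') (hv.2.2 y hy h)
    · right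
      rcases eq_or_lt_of_le (le_sup_right : z ≤ y ⊔ z) with h' | h'
      · exact hvyz.trans h'.symm
      · exact absurd (hvyz ▸ h') (hv.2.2 z hz h)
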